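/- Equivalently: let π : S → B(H) be a *-representation of a unital involutive semigroup on a Hilbert space H, F ⊆ H a closed subspace such that π(S)F is total in H, and P : H → F the orthogonal projection. Then the function φ(s) := Pπ(s)P* is multiplicative if and only if F = H. -/

import Mathlib

local notation "⟪" x ", " y "⟫" => @inner ℂ _ _ x y

/-- Let `π : S → B(H)` be a `*`-representation of a unital involutive semigroup on a
Hilbert space `H`, `F ⊆ H` a closed subspace with `π(S)F` total in `H`, and
`φ(s) = P π(s) P*` for the orthogonal projection `P : H → F` (characterized here by
`⟨φ(s)v, w⟩ = ⟨π(s)v, w⟩` for `v, w ∈ F`).  Then `φ` is multiplicative iff `F = H`. -/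
theorem statement10
    {S : Type*} [Monoid S] [StarMul S]
    {H : Type*} [NormedAddCommGroup H] [InnerProductSpace ℂ H] [CompleteSpace H]
    (π : S → (H →L[ℂ] H))
    (hπ1 : π 1 = ContinuousLinearMap.id ℂ H)
    (hπm : ∀ s t : S, π (s * t) = (π s).comp (π t))
    (hπstar : ∀ (s : S) (v w : H), ⟪π (star s) v, w⟫ = ⟪v, π s w⟫)
    (F : Submodule ℂ H) (hFclosed : IsClosed (F : Set H))
    (hcyc : Dense (Submodule.span ℂ (⋃ s : S, π s '' (F : Set H)) : Set H))
    (φ : S → (F →L[ℂ] F))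
    (hφ : ∀ (s : S) (v w : F), ⟪((φ s v : F) : H), (w : H)⟫ = ⟪π s (v : H), (w : H)⟫) :
    (∀ s t : S, φ (s * t) = (φ s).comp (φ t)) ↔ F = ⊤ := by
  constructor
  · intro hmul
    haveI : CompleteSpace F := hFclosed.completeSpace_coe
    have hmem : ∀ (t : S) (v : F), π t (v : H) ∈ F := by
      intro t v
      set x : H := π t (v : H) with hx
      set Q : H := (F.orthogonalProjection x : H) with hQ
      have hQmem : Q ∈ F := (F.orthogonalProjection x).2
      have hperp : x - Q ∈ Fᗮ := Submodule.sub_starProjection_mem_orthogonal x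
      -- (φ t v : H) = Q
      have hQeq : ((φ t v : F) : H) = Q := by
        have h0 : (F.orthogonalProjection x : H) = ((φ t v : F) : H) := by
          apply Submodule.eq_starProjection_of_mem_of_inner_eq_zero ((φ t v : F)).2
          intro w hw
          rw [inner_sub_left, hφ t v ⟨w, hw⟩]
          simp [hx]
        rw [← h0]
      -- key identity ⟪x, x⟫ = ⟪Q, x⟫
      have hkey : ⟪x, x⟫ = ⟪Q, x⟫ := by
        have h1 : ⟪((φ (star t * t) v : F) : H), (v : H)⟫ = ⟪x, x⟫ := by
          rw [hφ, hπm]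
          exact hπstar t x (v : H)
        have h2 : ⟪((φ (star t * t) v : F) : H), (v : H)⟫ = ⟪Q, x⟫ := by
          rw [hmul (star t) t]
          simp only [ContinuousLinearMap.comp_apply]
          rw [hφ (star t) (φ t v) v, hπstar t ((φ t v : F) : H) (v : H), hQeq]
        rw [← h1, h2]
      have hzero : x - Q = 0 := by
        have hdQ : ⟪x - Q, Q⟫ = 0 := by
          rw [inner_eq_zero_symm]
          exact (Submodule.mem_orthogonal F (x - Q)).1 hperp Q hQmem
        have : ⟪x - Q, x - Q⟫ = 0 := by
          rw [inner_sub_right, hdQ, inner_sub_left, hkey]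
          ring
        exact inner_self_eq_zero.mp this
      have : x = Q := by rwa [sub_eq_zero] at hzero
      rw [this]; exact hQmem
    have hspan : Submodule.span ℂ (⋃ s : S, π s '' (F : Set H)) ≤ F := by
      rw [Submodule.span_le]
      rintro y hy
      simp only [Set.mem_iUnion, Set.mem_image] at hy
      obtain ⟨s, v, hv, rfl⟩ := hy
      exact hmem s ⟨v, hv⟩
    rw [Submodule.eq_top_iff']
    intro y
    have : y ∈ closure ((Submodule.span ℂ (⋃ s : S, π s '' (F : Set H)) : Submodule ℂ H) : Set H) :=
      hcyc y
    have hsub : closure ((Submodule.span ℂ (⋃ s : S, π s '' (F : Set H)) : Submodule ℂ H) : Set H)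
        ⊆ (F : Set H) :=
      hFclosed.closure_subset_iff.mpr (SetLike.coe_subset_coe.mpr hspan)
    exact hsub this
  · intro hF s t
    ext v
    have hall : ∀ (a : F) (w : H), w ∈ F := fun _ w => by rw [hF]; trivial
    have hmemw : ∀ w : H, w ∈ F := fun w => by rw [hF]; trivial
    have hcoe : ∀ (r : S) (u : F), ((φ r u : F) : H) = π r (u : H) := by
      intro r u
      apply ext_inner_right ℂ
      intro w
      exact hφ r u ⟨w, hmemw w⟩
    rw [show (((φ s).comp (φ t)) v : H) = ((φ s (φ t v) : F) : H) from rfl,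
      hcoe, hcoe, hcoe, hπm]
    rfl
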